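/- Let W be a finite Weyl group acting on ℝⁿ and let w ∈ W with reflection length ℓ_R(w) = k, written w = s_{β₁}⋯s_{β_k} as a minimal-length product of reflections. Then the move-set Mov(w) = Im(w − Id) has ℝ-basis {β₁^∨,…,β_k^∨}, and in particular dim_ℝ Mov(w) = ℓ_R(w). -/

import Mathlib

open scoped RealInnerProductSpace

abbrev V (n : ℕ) : Type := EuclideanSpace ℝ (Fin n)

/-- `g` is the (orthogonal) reflection corresponding to the root `β`. -/
def IsReflAlong {n : ℕ} (β : V n) (g : V n ≃ₗ[ℝ] V n) : Prop :=
  ∀ v, g v = v - (2 * ⟪v, β⟫ / ⟪β, β⟫) • β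

/-- `Φ` is a finite crystallographic root system spanning `ℝⁿ`. -/
structure IsCrystalRootSystem {n : ℕ} (Φ : Set (V n)) : Prop where
  finite : Φ.Finite
  ne_zero : ∀ β ∈ Φ, β ≠ 0
  spans : Submodule.span ℝ Φ = ⊤
  refl_mem : ∀ α ∈ Φ, ∀ β ∈ Φ, β - (2 * ⟪β, α⟫ / ⟪α, α⟫) • α ∈ Φ
  crystal : ∀ α ∈ Φ, ∀ β ∈ Φ, ∃ z : ℤ, (2 * ⟪β, α⟫ / ⟪α, α⟫) = (z : ℝ)

/-- The reflection length of `w`: the least `k` such that `w` is a product of `k`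
reflections of the root system `Φ`. -/
noncomputable def reflLen {n : ℕ} (Φ : Set (V n)) (w : V n ≃ₗ[ℝ] V n) : ℕ :=
  sInf {k | ∃ l : List (V n ≃ₗ[ℝ] V n), l.length = k ∧
    (∀ g ∈ l, ∃ β ∈ Φ, IsReflAlong β g) ∧ l.prod = w}

/-- The Weyl group of `Φ`: the group generated by the reflections of `Φ`. -/
noncomputable def weylGroup {n : ℕ} (Φ : Set (V n)) : Subgroup (V n ≃ₗ[ℝ] V n) :=
  Subgroup.closure {g | ∃ β ∈ Φ, IsReflAlong β g}

/-- The coroot `β^∨ = 2β/(β,β)` of a root `β`. -/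
noncomputable def coroot {n : ℕ} (β : V n) : V n := (2 / ⟪β, β⟫) • β

/-- The coroot lattice: the `ℤ`-span of the coroots. -/
noncomputable def corootLattice {n : ℕ} (Φ : Set (V n)) : Submodule ℤ (V n) :=
  Submodule.span ℤ (coroot '' Φ)

/-- The move-set `Mov(w) = Im(w - Id)`. -/
noncomputable def movSet {n : ℕ} (w : V n ≃ₗ[ℝ] V n) : Submodule ℝ (V n) :=
  LinearMap.range (w.toLinearMap - LinearMap.id)

/-- The mod-set `Mod(w) = (w - Id)R^∨`. -/
noncomputable def modSet {n : ℕ} (Φ : Set (V n)) (w : V n ≃ₗ[ℝ] V n) : Submodule ℤ (V n) :=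
  Submodule.map ((w.toLinearMap - LinearMap.id).restrictScalars ℤ) (corootLattice Φ)


namespace Carter
variable {n : ℕ}

noncomputable def rmap (α : V n) : V n →ₗ[ℝ] V n where
  toFun v := v - (2 * ⟪v, α⟫ / ⟪α, α⟫) • α
  map_add' v w := by
    simp only [inner_add_left]
    rw [show 2 * (⟪v, α⟫ + ⟪w, α⟫) / ⟪α, α⟫
        = 2 * ⟪v, α⟫ / ⟪α, α⟫ + 2 * ⟪w, α⟫ / ⟪α, α⟫ by ring, add_smul]
    abel
  map_smul' c v := by
    simp only [real_inner_smul_left, RingHom.id_apply, smul_sub]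
    rw [show 2 * (c * ⟪v, α⟫) / ⟪α, α⟫ = c * (2 * ⟪v, α⟫ / ⟪α, α⟫) by ring, mul_smul]

lemma rmap_invol (α : V n) : Function.Involutive (rmap α) := by
  intro v
  by_cases hα : α = 0
  · simp [rmap, hα]
  · have hc : ⟪α, α⟫ ≠ 0 := fun h => hα (inner_self_eq_zero.mp h)
    show rmap α (v - _ • α) = v
    simp only [rmap, LinearMap.coe_mk, AddHom.coe_mk, inner_sub_left, real_inner_smul_left]
    rw [div_mul_cancel₀ _ hc]
    rw [show 2 * (⟪v, α⟫ - 2 * ⟪v, α⟫) / ⟪α, α⟫ = -(2 * ⟪v, α⟫ / ⟪α, α⟫) by ring]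
    rw [neg_smul]
    abel

noncomputable def rf (α : V n) : V n ≃ₗ[ℝ] V n :=
  LinearEquiv.ofInvolutive (rmap α) (rmap_invol α)

lemma rf_apply (α v : V n) : rf α v = v - (2 * ⟪v, α⟫ / ⟪α, α⟫) • α := rfl

lemma isReflAlong_rf (α : V n) : IsReflAlong α (rf α) := fun _ => rfl

lemma eq_rf_of_isReflAlong {α : V n} {g : V n ≃ₗ[ℝ] V n} (h : IsReflAlong α g) : g = rf α :=
  LinearEquiv.ext h

lemma rf_mul_self (α : V n) : rf α * rf α = 1 :=
  LinearEquiv.ext (rmap_invol α)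

lemma rf_inv (α : V n) : (rf α)⁻¹ = rf α :=
  inv_eq_of_mul_eq_one_right (rf_mul_self α)

lemma rf_apply_self {α : V n} (hα : α ≠ 0) : rf α α = -α := by
  have hc : ⟪α, α⟫ ≠ 0 := fun h => hα (inner_self_eq_zero.mp h)
  rw [rf_apply, mul_div_assoc, div_self hc, mul_one, two_smul]
  abel

lemma rf_smul {c : ℝ} (hc : c ≠ 0) (α : V n) : rf (c • α) = rf α := by
  refine LinearEquiv.ext fun v => ?_
  rw [rf_apply, rf_apply, real_inner_smul_right, real_inner_smul_left, real_inner_smul_right,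
    smul_smul]
  set s := ⟪α, α⟫ with hs
  set t := ⟪v, α⟫ with ht
  by_cases hα : s = 0
  · simp [hα]
  · refine congrArg (fun r : ℝ => v - r • α) ?_
    field_simp

def Ortho (w : V n ≃ₗ[ℝ] V n) : Prop := ∀ x y : V n, ⟪w x, w y⟫ = ⟪x, y⟫

lemma ortho_rf (α : V n) : Ortho (rf α) := by
  intro x y
  by_cases hα : α = 0
  · simp [rf_apply, hα]
  · have hc : ⟪α, α⟫ ≠ 0 := fun h => hα (inner_self_eq_zero.mp h)
    rw [rf_apply, rf_apply, inner_sub_left, inner_sub_right, inner_sub_right,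
      real_inner_smul_left, real_inner_smul_left, real_inner_smul_right,
      real_inner_smul_right, real_inner_comm α y]
    set s := ⟪α, α⟫ with hs
    set p := ⟪x, α⟫ with hp
    set q := ⟪y, α⟫ with hq
    field_simp
    ring

lemma ortho_one : Ortho (1 : V n ≃ₗ[ℝ] V n) := fun _ _ => rfl

lemma ortho_mul {a b : V n ≃ₗ[ℝ] V n} (ha : Ortho a) (hb : Ortho b) : Ortho (a * b) :=
  fun x y => (ha _ _).trans (hb x y)

lemma ortho_inv {a : V n ≃ₗ[ℝ] V n} (ha : Ortho a) : Ortho a⁻¹ := by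
  intro x y
  have h := ha (a⁻¹ x) (a⁻¹ y)
  have e : ∀ z, a (a⁻¹ z) = z := fun z => a.apply_symm_apply z
  rw [e, e] at h
  exact h.symm




/-- `g` is a reflection along some root of `Φ`. -/
def IsRefl (Φ : Set (V n)) (g : V n ≃ₗ[ℝ] V n) : Prop := ∃ β ∈ Φ, IsReflAlong β g

/-- `w` is a product of reflections of `Φ`. -/
def Word (Φ : Set (V n)) (w : V n ≃ₗ[ℝ] V n) : Prop :=
  ∃ l : List (V n ≃ₗ[ℝ] V n), (∀ g ∈ l, IsRefl Φ g) ∧ l.prod = w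

lemma ortho_prod (l : List (V n ≃ₗ[ℝ] V n)) (h : ∀ g ∈ l, ∃ β : V n, IsReflAlong β g) :
    Ortho l.prod := by
  induction l with
  | nil => exact ortho_one
  | cons g t ih =>
    rw [List.prod_cons]
    obtain ⟨β, hβ⟩ := h g (List.mem_cons_self)
    rw [eq_rf_of_isReflAlong hβ]
    exact ortho_mul (ortho_rf β) (ih fun x hx => h x (List.mem_cons_of_mem _ hx))

lemma ortho_of_word {Φ : Set (V n)} {w : V n ≃ₗ[ℝ] V n} (h : Word Φ w) : Ortho w := by
  obtain ⟨l, hl, rfl⟩ := h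
  exact ortho_prod l fun g hg => ⟨(hl g hg).choose, (hl g hg).choose_spec.2⟩

lemma word_one (Φ : Set (V n)) : Word Φ 1 := ⟨[], by simp, rfl⟩

lemma word_mul {Φ : Set (V n)} {a b : V n ≃ₗ[ℝ] V n} (ha : Word Φ a) (hb : Word Φ b) :
    Word Φ (a * b) := by
  obtain ⟨l, hl, rfl⟩ := ha
  obtain ⟨m, hm, rfl⟩ := hb
  exact ⟨l ++ m, fun g hg => ((List.mem_append.mp hg).elim (hl g) (hm g)), List.prod_append⟩

lemma word_rf {Φ : Set (V n)} {β : V n} (hβ : β ∈ Φ) : Word Φ (rf β) :=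
  ⟨[rf β], by simpa using ⟨β, hβ, isReflAlong_rf β⟩, List.prod_singleton⟩

/-- A product of reflections of `Φ` maps `Φ` into `Φ`. -/
lemma word_maps_phi {Φ : Set (V n)} (hΦ : IsCrystalRootSystem Φ) {w : V n ≃ₗ[ℝ] V n}
    (h : Word Φ w) {β : V n} (hβ : β ∈ Φ) : w β ∈ Φ := by
  obtain ⟨l, hl, rfl⟩ := h
  induction l with
  | nil => simpa using hβ
  | cons g t ih =>
    rw [List.prod_cons]
    obtain ⟨α, hα, hga⟩ := hl g (List.mem_cons_self)
    have ht : t.prod β ∈ Φ := ih fun x hx => hl x (List.mem_cons_of_mem _ hx)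
    show g (t.prod β) ∈ Φ
    rw [hga (t.prod β)]
    exact hΦ.refl_mem α hα _ ht

/-- Fixed space of `w`. -/
noncomputable def fixS (w : V n ≃ₗ[ℝ] V n) : Submodule ℝ (V n) :=
  LinearMap.ker (w.toLinearMap - LinearMap.id)

lemma mem_fixS_iff {w : V n ≃ₗ[ℝ] V n} {v : V n} : v ∈ fixS w ↔ w v = v := by
  simp [fixS, LinearMap.mem_ker, sub_eq_zero]

lemma mem_movSet_iff {w : V n ≃ₗ[ℝ] V n} {x : V n} : x ∈ movSet w ↔ ∃ v, w v - v = x := by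
  simp [movSet, LinearMap.mem_range]

lemma finrank_mov_add_fix (w : V n ≃ₗ[ℝ] V n) :
    Module.finrank ℝ (movSet w) + Module.finrank ℝ (fixS w) = n :=
  (LinearMap.finrank_range_add_finrank_ker (w.toLinearMap - LinearMap.id)).trans
    finrank_euclideanSpace_fin

lemma movSet_eq_bot_iff {w : V n ≃ₗ[ℝ] V n} : movSet w = ⊥ ↔ w = 1 := by
  constructor
  · intro h
    refine LinearEquiv.ext fun x => ?_
    have : w x - x ∈ movSet w := mem_movSet_iff.mpr ⟨x, rfl⟩
    rw [h, Submodule.mem_bot, sub_eq_zero] at this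
    simpa using this
  · rintro rfl
    rw [eq_bot_iff]
    rintro x hx
    obtain ⟨v, hv⟩ := mem_movSet_iff.mp hx
    simp only [Submodule.mem_bot]
    rw [← hv]
    show (1 : V n ≃ₗ[ℝ] V n) v - v = 0
    simp

lemma mov_mul_le (a b : V n ≃ₗ[ℝ] V n) : movSet (a * b) ≤ movSet a ⊔ movSet b := by
  rintro x hx
  obtain ⟨v, hv⟩ := mem_movSet_iff.mp hx
  have : x = (a (b v) - b v) + (b v - v) := by rw [← hv]; show a (b v) - v = _; abel
  rw [this]
  exact Submodule.add_mem _ (Submodule.mem_sup_left (mem_movSet_iff.mpr ⟨b v, rfl⟩))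
    (Submodule.mem_sup_right (mem_movSet_iff.mpr ⟨v, rfl⟩))

lemma mov_rf_le (α : V n) : movSet (rf α) ≤ Submodule.span ℝ {α} := by
  rintro x hx
  obtain ⟨v, hv⟩ := mem_movSet_iff.mp hx
  rw [← hv, rf_apply]
  rw [show v - (2 * ⟪v, α⟫ / ⟪α, α⟫) • α - v = (-(2 * ⟪v, α⟫ / ⟪α, α⟫)) • α by
    rw [neg_smul]; abel]
  exact Submodule.smul_mem _ _ (Submodule.mem_span_singleton_self α)

/-- Telescoping: the move-set of a product of reflections lies in the span of the roots. -/
lemma mov_word_le {S : Set (V n)} (l : List (V n ≃ₗ[ℝ] V n))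
    (h : ∀ g ∈ l, ∃ β ∈ S, IsReflAlong β g) : movSet l.prod ≤ Submodule.span ℝ S := by
  induction l with
  | nil =>
    rw [List.prod_nil, movSet_eq_bot_iff.mpr rfl]
    exact bot_le
  | cons g t ih =>
    rw [List.prod_cons]
    refine (mov_mul_le g t.prod).trans (sup_le ?_ (ih fun x hx => h x (List.mem_cons_of_mem _ hx)))
    obtain ⟨β, hβ, hgb⟩ := h g (List.mem_cons_self)
    rw [eq_rf_of_isReflAlong hgb]
    exact (mov_rf_le β).trans (Submodule.span_mono (Set.singleton_subset_iff.mpr hβ))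

/-- If `α = w v - v` is nonzero then premultiplying by `rf α` enlarges the fixed space. -/
lemma fix_lt_of_mov {w : V n ≃ₗ[ℝ] V n} (hw : Ortho w) {α : V n} (hα : α ≠ 0)
    (hmem : α ∈ movSet w) : fixS w < fixS (rf α * w) := by
  obtain ⟨v, hv⟩ := mem_movSet_iff.mp hmem
  have hs : ⟪α, α⟫ ≠ 0 := fun h => hα (inner_self_eq_zero.mp h)
  have hva : 2 * ⟪v, α⟫ + ⟪α, α⟫ = 0 := by
    have h1 : ⟪w v, w v⟫ = ⟪v, v⟫ := hw v v
    have h2 : w v = v + α := by rw [← hv]; abel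
    rw [h2, inner_add_add_self] at h1
    rw [real_inner_comm v α] at h1
    nlinarith [h1]
  have hle : fixS w ≤ fixS (rf α * w) := by
    intro u hu
    rw [mem_fixS_iff] at hu ⊢
    have hua : ⟪u, α⟫ = 0 := by
      rw [← hv, inner_sub_right]
      have h3 := hw u v
      calc ⟪u, w v⟫ - ⟪u, v⟫ = ⟪w u, w v⟫ - ⟪u, v⟫ := by rw [hu]
        _ = 0 := by rw [h3]; ring
    show rf α (w u) = u
    rw [hu, rf_apply, hua]
    simp
  have hvfix : v ∈ fixS (rf α * w) := by
    rw [mem_fixS_iff]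
    show rf α (w v) = v
    have h2 : w v = v + α := by rw [← hv]; abel
    rw [h2, rf_apply, inner_add_left]
    have hcoef : 2 * (⟪v, α⟫ + ⟪α, α⟫) / ⟪α, α⟫ = 1 := by
      rw [show 2 * (⟪v, α⟫ + ⟪α, α⟫) = 2 * ⟪v, α⟫ + ⟪α, α⟫ + ⟪α, α⟫ by ring, hva, zero_add]
      exact div_self hs
    rw [hcoef, one_smul]
    abel
  have hvnot : v ∉ fixS w := by
    intro hvw
    rw [mem_fixS_iff] at hvw
    rw [hvw] at hv
    simp only [sub_self] at hv
    exact hα hv.symm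
  exact lt_of_le_of_ne hle fun he => hvnot (by rw [he]; exact hvfix)


lemma mov_eq_fix_orthogonal {w : V n ≃ₗ[ℝ] V n} (hw : Ortho w) : movSet w = (fixS w)ᗮ := by
  have hle : movSet w ≤ (fixS w)ᗮ := by
    rintro x hx
    obtain ⟨v, hv⟩ := mem_movSet_iff.mp hx
    rw [Submodule.mem_orthogonal]
    intro u hu
    rw [mem_fixS_iff] at hu
    rw [← hv, inner_sub_right]
    calc ⟪u, w v⟫ - ⟪u, v⟫ = ⟪w u, w v⟫ - ⟪u, v⟫ := by rw [hu]
      _ = 0 := by rw [hw u v]; ring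
  refine Submodule.eq_of_le_of_finrank_le hle ?_
  have e1 := finrank_mov_add_fix w
  have e2 : Module.finrank ℝ (fixS w) + Module.finrank ℝ (fixS w)ᗮ = n :=
    (Submodule.finrank_add_finrank_orthogonal (fixS w)).trans finrank_euclideanSpace_fin
  omega

/-! ### Positive systems and simple roots relative to a generic vector -/

lemma inner_self_pos' {x : V n} (h : x ≠ 0) : 0 < ⟪x, x⟫ := by
  rcases (real_inner_self_nonneg (x := x)).lt_or_eq with h1 | h1
  · exact h1
  · exact absurd (inner_self_eq_zero.mp h1.symm) h


/-- Roots on the positive side of `v`. -/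
def Pos (Φ : Set (V n)) (v : V n) : Set (V n) := {β | β ∈ Φ ∧ 0 < ⟪β, v⟫}

/-- Indecomposable positive roots. -/
def Simple (Φ : Set (V n)) (v : V n) : Set (V n) :=
  {β | β ∈ Pos Φ v ∧ ¬∃ γ ∈ Pos Φ v, ∃ δ ∈ Pos Φ v, β = γ + δ}

lemma neg_mem_phi {Φ : Set (V n)} (hΦ : IsCrystalRootSystem Φ) {β : V n} (hβ : β ∈ Φ) :
    -β ∈ Φ := by
  have h := hΦ.refl_mem β hβ β hβ
  have hs : ⟪β, β⟫ ≠ 0 := fun h0 => hΦ.ne_zero β hβ (inner_self_eq_zero.mp h0)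
  rw [mul_div_assoc, div_self hs, mul_one, two_smul] at h
  rw [show β - (β + β) = -β by abel] at h
  exact h

lemma pos_neg_cases {Φ : Set (V n)} (hΦ : IsCrystalRootSystem Φ) {v : V n}
    (hv : ∀ β ∈ Φ, ⟪β, v⟫ ≠ 0) {β : V n} (hβ : β ∈ Φ) :
    β ∈ Pos Φ v ∨ -β ∈ Pos Φ v := by
  rcases lt_or_gt_of_ne (hv β hβ) with h | h
  · right
    exact ⟨neg_mem_phi hΦ hβ, by rw [inner_neg_left]; linarith⟩
  · left
    exact ⟨hβ, h⟩

/-- Strict Cauchy–Schwarz for non-proportional vectors. -/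
lemma strict_cs {α β : V n} (hα : α ≠ 0) (hnp : ∀ c : ℝ, β ≠ c • α) :
    ⟪β, α⟫ * ⟪β, α⟫ < ⟪α, α⟫ * ⟪β, β⟫ := by
  have hsα : 0 < ⟪α, α⟫ := inner_self_pos' hα
  set s := ⟪α, α⟫ with hs
  set t := ⟪β, α⟫ with ht
  set c : ℝ := t / s with hcdef
  have hc : c * s = t := div_mul_cancel₀ t hsα.ne'
  have hu : β - c • α ≠ 0 := fun h => hnp c (by rw [sub_eq_zero] at h; exact h)
  have hpos : 0 < ⟪β - c • α, β - c • α⟫ := inner_self_pos' hu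
  rw [inner_sub_left, inner_sub_right, inner_sub_right, real_inner_smul_left,
    real_inner_smul_left, real_inner_smul_right, real_inner_smul_right] at hpos
  have hcomm : ⟪α, β⟫ = t := by rw [ht]; exact (real_inner_comm α β).symm
  have hαα : ⟪α, α⟫ = s := hs.symm
  rw [← ht, hcomm, hαα, hc] at hpos
  have hBt : 0 < ⟪β, β⟫ - c * t := by linarith [hpos]
  have h3 : s * (c * t) = t * t := by rw [show s * (c * t) = c * s * t by ring, hc]
  nlinarith [mul_pos hsα hBt, h3]

lemma int_case {z z' : ℤ} (h1 : 1 ≤ z) (h2 : 1 ≤ z') (h4 : z * z' < 4) : z = 1 ∨ z' = 1 := by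
  by_contra hc
  push_neg at hc
  have e1 : 2 ≤ z := by omega
  have e2 : 2 ≤ z' := by omega
  nlinarith

/-- Key crystallographic fact: if two non-proportional roots have positive inner
product, their difference is a root. -/
lemma root_sub_mem {Φ : Set (V n)} (hΦ : IsCrystalRootSystem Φ) {α β : V n}
    (hα : α ∈ Φ) (hβ : β ∈ Φ) (hnp : ∀ c : ℝ, β ≠ c • α) (hpos : 0 < ⟪β, α⟫) :
    β - α ∈ Φ := by
  have hα0 : α ≠ 0 := hΦ.ne_zero α hα
  have hβ0 : β ≠ 0 := hΦ.ne_zero β hβ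
  have hsα : 0 < ⟪α, α⟫ := inner_self_pos' hα0
  have hsβ : 0 < ⟪β, β⟫ := inner_self_pos' hβ0
  obtain ⟨z, hz⟩ := hΦ.crystal α hα β hβ
  obtain ⟨z', hz'⟩ := hΦ.crystal β hβ α hα
  -- z = 2⟪β,α⟫/⟪α,α⟫ , z' = 2⟪α,β⟫/⟪β,β⟫, both ≥ 1
  have hz1 : (1 : ℝ) ≤ z := by
    rw [← hz]
    have h1 : 0 < 2 * ⟪β, α⟫ / ⟪α, α⟫ := by positivity
    have : ∃ m : ℤ, (m : ℝ) = 2 * ⟪β, α⟫ / ⟪α, α⟫ := ⟨z, hz.symm⟩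
    rcases this with ⟨m, hm⟩
    rw [← hm] at h1 ⊢
    exact_mod_cast h1
  have hz'1 : (1 : ℝ) ≤ z' := by
    rw [← hz']
    have hpos' : 0 < ⟪α, β⟫ := by rwa [real_inner_comm]
    have h1 : 0 < 2 * ⟪α, β⟫ / ⟪β, β⟫ := by positivity
    rcases (⟨z', hz'.symm⟩ : ∃ m : ℤ, (m : ℝ) = 2 * ⟪α, β⟫ / ⟪β, β⟫) with ⟨m, hm⟩
    rw [← hm] at h1 ⊢
    exact_mod_cast h1
  have hcs : ⟪β, α⟫ * ⟪β, α⟫ < ⟪α, α⟫ * ⟪β, β⟫ := strict_cs hα0 hnp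
  have hzz : (z : ℝ) * z' < 4 := by
    rw [← hz, ← hz', real_inner_comm α β]
    rw [div_mul_div_comm]
    rw [div_lt_iff₀ (by positivity)]
    nlinarith [hcs, real_inner_comm α β]
  have hz1' : 1 ≤ z := by exact_mod_cast hz1
  have hz'1' : 1 ≤ z' := by exact_mod_cast hz'1
  have hzz' : z * z' < 4 := by exact_mod_cast hzz
  rcases int_case hz1' hz'1' hzz' with h | h
  · -- 2⟪β,α⟫/⟪α,α⟫ = 1, so s_α β = β - α ∈ Φ
    have := hΦ.refl_mem α hα β hβ
    rw [hz, h] at this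
    simpa using this
  · -- 2⟪α,β⟫/⟪β,β⟫ = 1, so s_β α = α - β ∈ Φ, then negate
    have h2 := hΦ.refl_mem β hβ α hα
    rw [hz', h] at h2
    simp only [Int.cast_one, one_smul] at h2
    have := neg_mem_phi hΦ h2
    rw [neg_sub] at this
    exact this

/-- Distinct simple roots have nonpositive inner products. -/
lemma simple_inner_nonpos {Φ : Set (V n)} (hΦ : IsCrystalRootSystem Φ) {v : V n}
    (hv : ∀ β ∈ Φ, ⟪β, v⟫ ≠ 0) {α α' : V n} (hα : α ∈ Simple Φ v) (hα' : α' ∈ Simple Φ v)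
    (hne : α ≠ α') : ⟪α', α⟫ ≤ 0 := by
  by_contra hc
  push_neg at hc
  have hαΦ : α ∈ Φ := hα.1.1
  have hα'Φ : α' ∈ Φ := hα'.1.1
  have hα0 : α ≠ 0 := hΦ.ne_zero α hαΦ
  have hα'0 : α' ≠ 0 := hΦ.ne_zero α' hα'Φ
  have hsα : 0 < ⟪α, α⟫ := inner_self_pos' hα0
  by_cases hpar : ∃ c : ℝ, α' = c • α
  · obtain ⟨c, hcc⟩ := hpar
    have hcpos : 0 < c := by
      have h1 : 0 < ⟪α, v⟫ := hα.1.2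
      have h2 : 0 < ⟪α', v⟫ := hα'.1.2
      rw [hcc, real_inner_smul_left] at h2
      nlinarith
    have hc1 : c ≠ 1 := fun h => hne (by rw [hcc, h, one_smul])
    set s' := ⟪α, α⟫ with hs'
    obtain ⟨z, hz⟩ := hΦ.crystal α hαΦ α' hα'Φ
    obtain ⟨z', hz'⟩ := hΦ.crystal α' hα'Φ α hαΦ
    have hzc : (z : ℝ) = 2 * c := by
      rw [← hz, hcc, real_inner_smul_left,
        show 2 * (c * ⟪α, α⟫) = 2 * c * ⟪α, α⟫ by ring, mul_div_assoc,
        div_self hsα.ne', mul_one]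
    have hz'c : (z' : ℝ) = 2 / c := by
      have e1 : ⟪α, α'⟫ = c * ⟪α, α⟫ := by rw [hcc, real_inner_smul_right]
      have e2 : ⟪α', α'⟫ = c * (c * ⟪α, α⟫) := by
        rw [hcc, real_inner_smul_left, real_inner_smul_right]
      rw [← hz', e1, e2]
      rw [← hs'] at *
      field_simp
    have hzz : (z : ℝ) * z' = 4 := by
      rw [hzc, hz'c]
      field_simp
      ring
    have hz1 : 1 ≤ z := by
      have : (0 : ℝ) < z := by rw [hzc]; positivity
      exact_mod_cast this
    have hz'1 : 1 ≤ z' := by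
      have : (0 : ℝ) < z' := by rw [hz'c]; positivity
      exact_mod_cast this
    have hzz' : z * z' = 4 := by exact_mod_cast hzz
    have hz2 : (z : ℝ) ≠ 2 := by
      rw [hzc]
      intro h
      exact hc1 (by linarith)
    have hz2' : z ≠ 2 := fun h => hz2 (by rw [h]; norm_num)
    have hcase : z = 1 ∨ z = 4 := by
      have hle : z ≤ 4 := by nlinarith
      interval_cases z <;> omega
    rcases hcase with h | h
    · -- c = 1/2 : α = 2 • α' is decomposable
      have : c = 1 / 2 := by
        have : (1 : ℝ) = 2 * c := by rw [← hzc, h]; norm_num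
        linarith
      have hdec : α = α' + α' := by
        rw [hcc, this, ← add_smul]
        norm_num
      exact hα.2 ⟨α', hα'.1, α', hα'.1, hdec⟩
    · -- c = 2 : α' = α + α is decomposable
      have : c = 2 := by
        have : (4 : ℝ) = 2 * c := by rw [← hzc, h]; norm_num
        linarith
      have hdec : α' = α + α := by
        rw [hcc, this, two_smul]
      exact hα'.2 ⟨α, hα.1, α, hα.1, hdec⟩
  · -- non-proportional: α' - α would be a root, contradicting simplicity
    have hnp : ∀ c : ℝ, α' ≠ c • α := fun c h => hpar ⟨c, h⟩
    have hδ : α' - α ∈ Φ := root_sub_mem hΦ hαΦ hα'Φ hnp hc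
    rcases pos_neg_cases hΦ hv hδ with h | h
    · exact hα'.2 ⟨α, hα.1, α' - α, h, by abel⟩
    · rw [neg_sub] at h
      exact hα.2 ⟨α', hα'.1, α - α', h, by abel⟩

open scoped Classical in
/-- The finite set of simple roots. -/
noncomputable def simpFinset {Φ : Set (V n)} (hΦ : IsCrystalRootSystem Φ) (v : V n) :
    Finset (V n) :=
  (hΦ.finite.subset (fun x hx => hx.1.1 : Simple Φ v ⊆ Φ)).toFinset

lemma mem_simpFinset {Φ : Set (V n)} {hΦ : IsCrystalRootSystem Φ} {v : V n} {x : V n} :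
    x ∈ simpFinset hΦ v ↔ x ∈ Simple Φ v := Set.Finite.mem_toFinset _

/-- Simple roots admit only the trivial linear relation. -/
lemma simple_indep {Φ : Set (V n)} (hΦ : IsCrystalRootSystem Φ) {v : V n}
    (hv : ∀ β ∈ Φ, ⟪β, v⟫ ≠ 0) (c : V n → ℝ)
    (hsum : ∑ δ ∈ simpFinset hΦ v, c δ • δ = 0) : ∀ δ ∈ simpFinset hΦ v, c δ = 0 := by
  classical
  set Δ := simpFinset hΦ v with hΔ
  set P := Δ.filter (fun δ => 0 < c δ) with hP
  set N := Δ.filter (fun δ => c δ < 0) with hN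
  have hsub : P ∪ N ⊆ Δ := by
    intro x hx
    rcases Finset.mem_union.mp hx with h | h
    · exact (Finset.mem_filter.mp h).1
    · exact (Finset.mem_filter.mp h).1
  have hdisj : Disjoint P N := by
    rw [Finset.disjoint_left]
    intro x hxP hxN
    have h1 := (Finset.mem_filter.mp hxP).2
    have h2 := (Finset.mem_filter.mp hxN).2
    linarith
  have hPN : ∑ δ ∈ P ∪ N, c δ • δ = 0 := by
    rw [← hsum]
    apply Finset.sum_subset hsub
    intro x hxΔ hxn
    have hx0 : c x = 0 := by
      rcases lt_trichotomy (c x) 0 with h | h | h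
      · exact absurd (Finset.mem_union_right _ (Finset.mem_filter.mpr ⟨hxΔ, h⟩)) hxn
      · exact h
      · exact absurd (Finset.mem_union_left _ (Finset.mem_filter.mpr ⟨hxΔ, h⟩)) hxn
    rw [hx0, zero_smul]
  have hAB : (∑ δ ∈ P, c δ • δ) = ∑ δ ∈ N, (-(c δ)) • δ := by
    have h1 : (∑ δ ∈ P, c δ • δ) + (∑ δ ∈ N, c δ • δ) = 0 := by
      rw [← Finset.sum_union hdisj]; exact hPN
    have h2 : ∑ δ ∈ N, (-(c δ)) • δ = -(∑ δ ∈ N, c δ • δ) := by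
      rw [← Finset.sum_neg_distrib]
      exact Finset.sum_congr rfl fun x _ => neg_smul _ _
    rw [h2]
    exact eq_neg_of_add_eq_zero_left h1
  have hinnerv : ∀ δ ∈ Δ, 0 < ⟪δ, v⟫ := fun δ hδ => (mem_simpFinset.mp hδ).1.2
  have hAzero : (∑ δ ∈ P, c δ • δ) = 0 := by
    have hip : ⟪∑ δ ∈ P, c δ • δ, ∑ δ ∈ P, c δ • δ⟫ ≤ 0 := by
      nth_rewrite 2 [hAB]
      rw [sum_inner]
      apply Finset.sum_nonpos
      intro ε hε
      rw [real_inner_smul_left, inner_sum]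
      have hterm : ∀ δ ∈ N, ⟪ε, (-(c δ)) • δ⟫ = (-(c δ)) * ⟪δ, ε⟫ := fun δ _ => by
        rw [real_inner_smul_right, real_inner_comm]
      rw [Finset.sum_congr rfl hterm]
      have hcε : 0 < c ε := (Finset.mem_filter.mp hε).2
      apply mul_nonpos_of_nonneg_of_nonpos hcε.le
      apply Finset.sum_nonpos
      intro δ hδ
      have hcδ : c δ < 0 := (Finset.mem_filter.mp hδ).2
      have hne : δ ≠ ε := fun h => by rw [h] at hcδ; linarith
      have hip2 : ⟪δ, ε⟫ ≤ 0 := by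
        have hδS : δ ∈ Simple Φ v := mem_simpFinset.mp (hsub (Finset.mem_union_right _ hδ))
        have hεS : ε ∈ Simple Φ v := mem_simpFinset.mp (hsub (Finset.mem_union_left _ hε))
        exact simple_inner_nonpos hΦ hv hεS hδS (Ne.symm hne)
      nlinarith
    exact inner_self_eq_zero.mp (le_antisymm hip real_inner_self_nonneg)
  have hPempty : P = ∅ := by
    rw [← Finset.not_nonempty_iff_eq_empty]
    intro hne
    have hpos : 0 < ∑ δ ∈ P, c δ * ⟪δ, v⟫ := by
      apply Finset.sum_pos (fun δ hδ => ?_) hne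
      exact mul_pos (Finset.mem_filter.mp hδ).2 (hinnerv δ (Finset.mem_filter.mp hδ).1)
    have heq : ⟪∑ δ ∈ P, c δ • δ, v⟫ = ∑ δ ∈ P, c δ * ⟪δ, v⟫ := by
      rw [sum_inner]
      exact Finset.sum_congr rfl fun δ _ => real_inner_smul_left _ _ _
    rw [hAzero, inner_zero_left] at heq
    linarith [heq, hpos]
  have hNempty : N = ∅ := by
    rw [← Finset.not_nonempty_iff_eq_empty]
    intro hne
    have hBzero : (∑ δ ∈ N, (-(c δ)) • δ) = 0 := by rw [← hAB]; exact hAzero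
    have hpos : 0 < ∑ δ ∈ N, (-(c δ)) * ⟪δ, v⟫ := by
      apply Finset.sum_pos (fun δ hδ => ?_) hne
      have := (Finset.mem_filter.mp hδ).2
      exact mul_pos (by linarith) (hinnerv δ (Finset.mem_filter.mp hδ).1)
    have heq : ⟪∑ δ ∈ N, (-(c δ)) • δ, v⟫ = ∑ δ ∈ N, (-(c δ)) * ⟪δ, v⟫ := by
      rw [sum_inner]
      exact Finset.sum_congr rfl fun δ _ => real_inner_smul_left _ _ _
    rw [hBzero, inner_zero_left] at heq
    linarith [heq, hpos]
  intro δ hδ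
  rcases lt_trichotomy (c δ) 0 with h | h | h
  · have : δ ∈ N := Finset.mem_filter.mpr ⟨hδ, h⟩
    rw [hNempty] at this
    exact absurd this (Finset.notMem_empty δ)
  · exact h
  · have : δ ∈ P := Finset.mem_filter.mpr ⟨hδ, h⟩
    rw [hPempty] at this
    exact absurd this (Finset.notMem_empty δ)

open scoped Classical in
/-- Height-type measure used for induction over positive roots. -/
noncomputable def msr {Φ : Set (V n)} (hΦ : IsCrystalRootSystem Φ) (v : V n) (β : V n) : ℕ :=
  (hΦ.finite.toFinset.filter (fun γ => γ ∈ Pos Φ v ∧ ⟪γ, v⟫ < ⟪β, v⟫)).card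

lemma msr_lt {Φ : Set (V n)} (hΦ : IsCrystalRootSystem Φ) {v : V n} {β γ : V n}
    (hγ : γ ∈ Pos Φ v) (hlt : ⟪γ, v⟫ < ⟪β, v⟫) : msr hΦ v γ < msr hΦ v β := by
  classical
  apply Finset.card_lt_card
  rw [Finset.ssubset_iff_of_subset]
  · refine ⟨γ, ?_, ?_⟩
    · rw [Finset.mem_filter]
      exact ⟨hΦ.finite.mem_toFinset.mpr hγ.1, hγ, hlt⟩
    · rw [Finset.mem_filter]
      rintro ⟨-, -, hcon⟩
      exact absurd hcon (lt_irrefl _)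
  · intro x hx
    rw [Finset.mem_filter] at hx ⊢
    exact ⟨hx.1, hx.2.1, hx.2.2.trans hlt⟩

/-- Every positive root is a nonnegative combination of simple roots. -/
lemma pos_decomp {Φ : Set (V n)} (hΦ : IsCrystalRootSystem Φ) {v : V n}
    (hv : ∀ β ∈ Φ, ⟪β, v⟫ ≠ 0) {β : V n} (hβ : β ∈ Pos Φ v) :
    ∃ c : V n → ℝ, (∀ x, 0 ≤ c x) ∧ β = ∑ δ ∈ simpFinset hΦ v, c δ • δ := by
  classical
  suffices h : ∀ N, ∀ β ∈ Pos Φ v, msr hΦ v β < N →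
      ∃ c : V n → ℝ, (∀ x, 0 ≤ c x) ∧ β = ∑ δ ∈ simpFinset hΦ v, c δ • δ by
    exact h (msr hΦ v β + 1) β hβ (Nat.lt_succ_self _)
  intro N
  induction N with
  | zero => intro β hβ h; exact absurd h (Nat.not_lt_zero _)
  | succ N ih =>
    intro β hβ hN
    by_cases hs : β ∈ Simple Φ v
    · refine ⟨fun x => if x = β then 1 else 0, fun x => by dsimp only; split <;> norm_num, ?_⟩
      rw [Finset.sum_eq_single_of_mem β (mem_simpFinset.mpr hs)]
      · simp
      · intro x hx hne
        simp [hne]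
    · have hdec : ∃ γ ∈ Pos Φ v, ∃ δ ∈ Pos Φ v, β = γ + δ := by
        by_contra hcon
        exact hs ⟨hβ, hcon⟩
      obtain ⟨γ, hγ, δ, hδ, hβeq⟩ := hdec
      have hsum : ⟪β, v⟫ = ⟪γ, v⟫ + ⟪δ, v⟫ := by rw [hβeq, inner_add_left]
      have hγlt : ⟪γ, v⟫ < ⟪β, v⟫ := by have := hδ.2; linarith
      have hδlt : ⟪δ, v⟫ < ⟪β, v⟫ := by have := hγ.2; linarith
      obtain ⟨cγ, hcγ, hγeq⟩ := ih γ hγ (by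
        have := msr_lt hΦ hγ hγlt
        omega)
      obtain ⟨cδ, hcδ, hδeq⟩ := ih δ hδ (by
        have := msr_lt hΦ hδ hδlt
        omega)
      refine ⟨fun x => cγ x + cδ x, fun x => add_nonneg (hcγ x) (hcδ x), ?_⟩
      rw [hβeq, hγeq, hδeq, ← Finset.sum_add_distrib]
      exact Finset.sum_congr rfl fun x _ => (add_smul _ _ _).symm

/-- If a sum of two positive roots is a multiple of a simple root, each summand is
proportional to it. -/
lemma sum_eq_smul_simple {Φ : Set (V n)} (hΦ : IsCrystalRootSystem Φ) {v : V n}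
    (hv : ∀ β ∈ Φ, ⟪β, v⟫ ≠ 0) {β γ α : V n} {q : ℝ} (hβ : β ∈ Pos Φ v) (hγ : γ ∈ Pos Φ v)
    (hα : α ∈ Simple Φ v) (heq : β + γ = q • α) : ∃ c : ℝ, β = c • α := by
  classical
  obtain ⟨b, hb, hbeq⟩ := pos_decomp hΦ hv hβ
  obtain ⟨g, hg, hgeq⟩ := pos_decomp hΦ hv hγ
  have hαΔ : α ∈ simpFinset hΦ v := mem_simpFinset.mpr hα
  set c : V n → ℝ := fun x => b x + g x - (if x = α then q else 0) with hc
  have hzero : ∑ δ ∈ simpFinset hΦ v, c δ • δ = 0 := by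
    have hsplit : ∀ δ ∈ simpFinset hΦ v,
        c δ • δ = (b δ • δ + g δ • δ) - (if δ = α then q else 0) • δ := by
      intro δ _
      rw [hc]
      rw [sub_smul, add_smul]
    rw [Finset.sum_congr rfl hsplit, Finset.sum_sub_distrib, Finset.sum_add_distrib]
    have hite : ∑ δ ∈ simpFinset hΦ v, (if δ = α then q else 0) • δ = q • α := by
      rw [Finset.sum_eq_single_of_mem α hαΔ]
      · simp
      · intro x hx hne
        simp [hne]
    rw [hite, ← hbeq, ← hgeq, ← heq]
    abel
  have hall := simple_indep hΦ hv c hzero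
  have hb0 : ∀ δ ∈ simpFinset hΦ v, δ ≠ α → b δ = 0 := by
    intro δ hδ hne
    have := hall δ hδ
    rw [hc] at this
    simp only [if_neg hne, sub_zero] at this
    have := hg δ
    have := hb δ
    linarith [hall δ hδ]
  refine ⟨b α, ?_⟩
  rw [hbeq, Finset.sum_eq_single_of_mem α hαΔ]
  · intro x hx hne
    rw [hb0 x hx hne, zero_smul]

/-- Reflection in a simple root permutes the other positive roots. -/
lemma simple_refl_pos {Φ : Set (V n)} (hΦ : IsCrystalRootSystem Φ) {v : V n}
    (hv : ∀ β ∈ Φ, ⟪β, v⟫ ≠ 0) {α β : V n} (hα : α ∈ Simple Φ v) (hβ : β ∈ Pos Φ v)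
    (hnp : ∀ c : ℝ, β ≠ c • α) : rf α β ∈ Pos Φ v := by
  have hαΦ : α ∈ Φ := hα.1.1
  have hrΦ : rf α β ∈ Φ := by
    rw [rf_apply]
    exact hΦ.refl_mem α hαΦ β hβ.1
  by_contra hcon
  rcases pos_neg_cases hΦ hv hrΦ with h | h
  · exact hcon h
  · have heq : β + (-(rf α β)) = (2 * ⟪β, α⟫ / ⟪α, α⟫) • α := by
      rw [rf_apply]
      abel
    obtain ⟨c, hc⟩ := sum_eq_smul_simple hΦ hv hβ h hα heq
    exact hnp c hc

lemma rf_conj {u : V n ≃ₗ[ℝ] V n} (hu : Ortho u) (x : V n) :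
    rf (u x) = u * rf x * u⁻¹ := by
  refine LinearEquiv.ext fun y => ?_
  show rf (u x) y = u (rf x (u⁻¹ y))
  have e0 : u (u⁻¹ y) = y := u.apply_symm_apply y
  rw [rf_apply, rf_apply, map_sub, map_smul, e0]
  have e1 : ⟪u⁻¹ y, x⟫ = ⟪y, u x⟫ := by
    have h := hu (u⁻¹ y) x
    rw [e0] at h
    exact h.symm
  have e2 : ⟪x, x⟫ = ⟪u x, u x⟫ := (hu x x).symm
  rw [e1, e2]

/-- Words in simple reflections. -/
def SWord (Φ : Set (V n)) (v : V n) (L : List (V n ≃ₗ[ℝ] V n)) : Prop :=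
  ∀ g ∈ L, ∃ α ∈ Simple Φ v, g = rf α

lemma sword_word {Φ : Set (V n)} {v : V n} {L : List (V n ≃ₗ[ℝ] V n)}
    (h : SWord Φ v L) : Word Φ L.prod :=
  ⟨L, fun g hg => by
    obtain ⟨α, hα, rfl⟩ := h g hg
    exact ⟨α, hα.1.1, isReflAlong_rf α⟩, rfl⟩

lemma word_fix_pos {Φ : Set (V n)} (hΦ : IsCrystalRootSystem Φ) {v : V n}
    {w : V n ≃ₗ[ℝ] V n} (hw : Word Φ w) (hwv : w v = v) {β : V n}
    (hβ : β ∈ Pos Φ v) : w β ∈ Pos Φ v := by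
  refine ⟨word_maps_phi hΦ hw hβ.1, ?_⟩
  have h := ortho_of_word hw β v
  rw [hwv] at h
  rw [h]
  exact hβ.2

/-- Key absorption step: a simple word which makes `β` negative absorbs `rf β`
with a net loss of one letter. -/
lemma absorb {Φ : Set (V n)} (hΦ : IsCrystalRootSystem Φ) {v : V n}
    (hv : ∀ β ∈ Φ, ⟪β, v⟫ ≠ 0) :
    ∀ L : List (V n ≃ₗ[ℝ] V n), SWord Φ v L → ∀ β ∈ Pos Φ v, L.prod β ∉ Pos Φ v →
    ∃ L', SWord Φ v L' ∧ L'.prod = L.prod * rf β ∧ L'.length + 1 = L.length := by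
  intro L
  induction L with
  | nil =>
    intro _ β hβ hcon
    rw [List.prod_nil] at hcon
    exact absurd hβ hcon
  | cons g T ih =>
    intro hS β hβ hcon
    obtain ⟨α, hαS, hgα⟩ := hS g (List.mem_cons_self)
    have hTS : SWord Φ v T := fun x hx => hS x (List.mem_cons_of_mem _ hx)
    rw [List.prod_cons] at hcon
    by_cases hδ : T.prod β ∈ Pos Φ v
    · have hgδ : rf α (T.prod β) ∉ Pos Φ v := by
        rw [← hgα]
        exact hcon
      have hpar : ∃ c : ℝ, T.prod β = c • α := by
        by_contra hnp
        push_neg at hnp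
        exact hgδ (simple_refl_pos hΦ hv hαS hδ hnp)
      obtain ⟨c, hc⟩ := hpar
      have hδΦ : T.prod β ∈ Φ := hδ.1
      have hδ0 : T.prod β ≠ 0 := hΦ.ne_zero _ hδΦ
      have hc0 : c ≠ 0 := fun h => hδ0 (by rw [hc, h, zero_smul])
      have hrfδ : rf (T.prod β) = g := by rw [hc, rf_smul hc0, hgα]
      have hconj : rf (T.prod β) = T.prod * rf β * (T.prod)⁻¹ :=
        rf_conj (ortho_of_word (sword_word hTS)) β
      refine ⟨T, hTS, ?_, rfl⟩
      have hmain : T.prod * rf β * (T.prod)⁻¹ * T.prod * rf β = T.prod := by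
        rw [mul_assoc (T.prod * rf β), inv_mul_cancel, mul_one, mul_assoc, rf_mul_self, mul_one]
      rw [List.prod_cons, ← hrfδ, hconj, hmain]
    · obtain ⟨T', hT'S, hT'p, hT'l⟩ := ih hTS β hβ hδ
      refine ⟨g :: T', fun x hx => ?_, ?_, ?_⟩
      · rcases List.mem_cons.mp hx with h | h
        · exact h ▸ ⟨α, hαS, hgα⟩
        · exact hT'S x h
      · rw [List.prod_cons, hT'p, List.prod_cons, mul_assoc]
      · rw [List.length_cons, List.length_cons, ← hT'l]

lemma sword_eq_one {Φ : Set (V n)} (hΦ : IsCrystalRootSystem Φ) {v : V n}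
    (hv : ∀ β ∈ Φ, ⟪β, v⟫ ≠ 0) :
    ∀ N, ∀ L : List (V n ≃ₗ[ℝ] V n), SWord Φ v L → L.length < N → L.prod v = v →
    L.prod = 1 := by
  intro N
  induction N with
  | zero => intro L _ h _; exact absurd h (Nat.not_lt_zero _)
  | succ N ih =>
    intro L hS hlen hfix
    rcases List.eq_nil_or_concat L with rfl | ⟨F, g, rfl⟩
    · rfl
    · rw [List.concat_eq_append] at hS hlen hfix ⊢
      obtain ⟨α, hαS, hgα⟩ := hS g (by simp)
      have hFS : SWord Φ v F := fun x hx => hS x (by simp [hx])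
      have hprod : (F ++ [g]).prod = F.prod * rf α := by
        rw [List.prod_append, List.prod_singleton, hgα]
      have hα0 : α ≠ 0 := hΦ.ne_zero α hαS.1.1
      have hword : Word Φ (F ++ [g]).prod := sword_word hS
      have hwα : (F ++ [g]).prod α ∈ Pos Φ v := word_fix_pos hΦ hword hfix hαS.1
      have hFw : F.prod = (F ++ [g]).prod * rf α := by
        rw [hprod, mul_assoc, rf_mul_self, mul_one]
      have hFα : F.prod α = -((F ++ [g]).prod α) := by
        rw [hFw]
        show (F ++ [g]).prod (rf α α) = _
        rw [rf_apply_self hα0, map_neg]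
      have hFnot : F.prod α ∉ Pos Φ v := by
        rw [hFα]
        rintro ⟨-, hp⟩
        rw [inner_neg_left] at hp
        linarith [hwα.2]
      obtain ⟨F', hF'S, hF'p, hF'l⟩ := absorb hΦ hv F hFS α hαS.1 hFnot
      have hF'w : F'.prod = (F ++ [g]).prod := by
        rw [hF'p, hprod]
      have hlen2 : F'.length < N := by
        rw [List.length_append, List.length_singleton] at hlen
        omega
      have hfix2 : F'.prod v = v := by rw [hF'w]; exact hfix
      rw [← hF'w]
      exact ih F' hF'S hlen2 hfix2

lemma gen_closure {Φ : Set (V n)} (hΦ : IsCrystalRootSystem Φ) {v : V n}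
    (hv : ∀ β ∈ Φ, ⟪β, v⟫ ≠ 0) {β : V n} (hβ : β ∈ Φ) :
    rf β ∈ Subgroup.closure {g : V n ≃ₗ[ℝ] V n | ∃ α ∈ Simple Φ v, g = rf α} := by
  suffices h : ∀ N, ∀ β ∈ Pos Φ v, msr hΦ v β < N →
      rf β ∈ Subgroup.closure {g : V n ≃ₗ[ℝ] V n | ∃ α ∈ Simple Φ v, g = rf α} by
    rcases pos_neg_cases hΦ hv hβ with hp | hp
    · exact h _ β hp (Nat.lt_succ_self _)
    · have hneg : rf β = rf (-β) := by
        rw [show -β = (-1 : ℝ) • β by simp, rf_smul (by norm_num)]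
      rw [hneg]
      exact h _ (-β) hp (Nat.lt_succ_self _)
  intro N
  induction N with
  | zero => intro β hβp h; exact absurd h (Nat.not_lt_zero _)
  | succ N ih =>
    intro β hβp hN
    by_cases hβS : β ∈ Simple Φ v
    · exact Subgroup.subset_closure ⟨β, hβS, rfl⟩
    · obtain ⟨c, hc, hceq⟩ := pos_decomp hΦ hv hβp
      have hβ0 : β ≠ 0 := hΦ.ne_zero β hβp.1
      have hip : 0 < ⟪β, β⟫ := inner_self_pos' hβ0
      have hsum : ⟪β, β⟫ = ∑ δ ∈ simpFinset hΦ v, c δ * ⟪δ, β⟫ := by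
        nth_rewrite 1 [hceq]
        rw [sum_inner]
        exact Finset.sum_congr rfl fun δ _ => real_inner_smul_left _ _ _
      have hex : ∃ δ ∈ simpFinset hΦ v, 0 < c δ * ⟪δ, β⟫ := by
        by_contra hcon
        push_neg at hcon
        have := Finset.sum_nonpos hcon
        linarith [hip, hsum]
      obtain ⟨δ, hδΔ, hδpos⟩ := hex
      have hδS : δ ∈ Simple Φ v := mem_simpFinset.mp hδΔ
      have hδβ : 0 < ⟪δ, β⟫ := by
        rcases (hc δ).lt_or_eq with h | h
        · nlinarith [hδpos]
        · rw [← h] at hδpos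
          simp at hδpos
      by_cases hpar : ∃ e : ℝ, β = e • δ
      · obtain ⟨e, he⟩ := hpar
        have he0 : e ≠ 0 := fun h => hβ0 (by rw [he, h, zero_smul])
        rw [he, rf_smul he0]
        exact Subgroup.subset_closure ⟨δ, hδS, rfl⟩
      · have hnp : ∀ e : ℝ, β ≠ e • δ := fun e h => hpar ⟨e, h⟩
        have hγ : rf δ β ∈ Pos Φ v := simple_refl_pos hΦ hv hδS hβp hnp
        have hδ0 : δ ≠ 0 := hΦ.ne_zero δ hδS.1.1
        have hq : 0 < 2 * ⟪β, δ⟫ / ⟪δ, δ⟫ := by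
          have h1 : 0 < ⟪β, δ⟫ := by rwa [real_inner_comm]
          have h2 : 0 < ⟪δ, δ⟫ := inner_self_pos' hδ0
          positivity
        have hlt : ⟪rf δ β, v⟫ < ⟪β, v⟫ := by
          rw [rf_apply, inner_sub_left, real_inner_smul_left]
          have h3 : 0 < ⟪δ, v⟫ := hδS.1.2
          nlinarith [hq, h3]
        have hmsr : msr hΦ v (rf δ β) < N := by
          have := msr_lt hΦ hγ hlt
          omega
        have hrfγ := ih (rf δ β) hγ hmsr
        have hconj : rf (rf δ β) = rf δ * rf β * rf δ := by
          have h := rf_conj (ortho_rf δ) β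
          rwa [rf_inv] at h
        have hfinal : rf β = rf δ * rf (rf δ β) * rf δ := by
          rw [hconj]
          symm
          calc rf δ * (rf δ * rf β * rf δ) * rf δ
              = (rf δ * rf δ) * rf β * (rf δ * rf δ) := by simp only [mul_assoc]
            _ = rf β := by rw [rf_mul_self, one_mul, mul_one]
        rw [hfinal]
        exact Subgroup.mul_mem _
          (Subgroup.mul_mem _ (Subgroup.subset_closure ⟨δ, hδS, rfl⟩) hrfγ)
          (Subgroup.subset_closure ⟨δ, hδS, rfl⟩)

/-- An element of the Weyl group fixing a vector not orthogonal to any root is trivial. -/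
lemma stab_eq_one {Φ : Set (V n)} (hΦ : IsCrystalRootSystem Φ) {v : V n}
    (hv : ∀ β ∈ Φ, ⟪β, v⟫ ≠ 0) {w : V n ≃ₗ[ℝ] V n} (hw : Word Φ w) (hwv : w v = v) :
    w = 1 := by
  classical
  have hcl : w ∈ Subgroup.closure {g : V n ≃ₗ[ℝ] V n | ∃ α ∈ Simple Φ v, g = rf α} := by
    obtain ⟨l, hl, rfl⟩ := hw
    apply Subgroup.list_prod_mem
    intro x hx
    obtain ⟨β, hβ, hxβ⟩ := hl x hx
    rw [eq_rf_of_isReflAlong hxβ]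
    exact gen_closure hΦ hv hβ
  have hwv' : w v = v := hwv
  clear hwv
  have hrep : ∃ L, SWord Φ v L ∧ L.prod = w := by
    refine Subgroup.closure_induction ?_ ?_ ?_ ?_ hcl
    · rintro x ⟨α, hα, rfl⟩
      exact ⟨[rf α], fun g hg => by
        rw [List.mem_singleton] at hg
        exact ⟨α, hα, hg⟩, List.prod_singleton⟩
    · exact ⟨[], fun g hg => absurd hg List.not_mem_nil, rfl⟩
    · rintro x y - - ⟨Lx, hLx, rfl⟩ ⟨Ly, hLy, rfl⟩
      exact ⟨Lx ++ Ly, fun g hg => (List.mem_append.mp hg).elim (hLx g) (hLy g),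
        List.prod_append⟩
    · rintro x - ⟨L, hL, rfl⟩
      refine ⟨L.reverse.map (fun g => g⁻¹), ?_, ?_⟩
      · intro g hg
        rw [List.mem_map] at hg
        obtain ⟨a, ha, rfl⟩ := hg
        obtain ⟨α, hα, rfl⟩ := hL a (List.mem_reverse.mp ha)
        exact ⟨α, hα, by rw [rf_inv]⟩
      · rw [List.map_reverse]
        exact (List.prod_inv_reverse L).symm
  obtain ⟨L, hLS, hLp⟩ := hrep
  rw [← hLp] at hwv' ⊢
  exact sword_eq_one hΦ hv (L.length + 1) L hLS (Nat.lt_succ_self _) hwv'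

/-- A finite-dimensional space is not covered by finitely many "bad" submodules. -/
lemma avoid (p : Submodule ℝ (V n)) (s : Finset (V n)) (q : V n → Submodule ℝ (V n))
    (h : ∀ β ∈ s, ¬ p ≤ q β) : ∃ x ∈ p, ∀ β ∈ s, x ∉ q β := by
  classical
  induction s using Finset.induction_on with
  | empty => exact ⟨0, p.zero_mem, fun β hβ => absurd hβ (Finset.notMem_empty β)⟩
  | @insert i s hi ih =>
    obtain ⟨x, hxp, hxn⟩ := ih (fun β hβ => h β (Finset.mem_insert_of_mem hβ))
    obtain ⟨u, hup, huq⟩ := SetLike.not_le_iff_exists.mp (h i (Finset.mem_insert_self i s))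
    have hbad : ∀ β ∈ insert i s, {t : ℝ | x + t • u ∈ q β}.Subsingleton := by
      intro β hβ t1 ht1 t2 ht2
      by_contra hne
      have hsub : (t1 - t2) • u ∈ q β := by
        have hsm := Submodule.sub_mem _ ht1 ht2
        rwa [show x + t1 • u - (x + t2 • u) = (t1 - t2) • u by rw [sub_smul]; abel] at hsm
      have huf : u ∈ q β := by
        have h12 : t1 - t2 ≠ 0 := sub_ne_zero.mpr hne
        have hs2 := Submodule.smul_mem _ (t1 - t2)⁻¹ hsub
        rwa [smul_smul, inv_mul_cancel₀ h12, one_smul] at hs2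
      have hxf : x ∈ q β := by
        have hs3 := Submodule.sub_mem _ ht1 (Submodule.smul_mem _ t1 huf)
        rwa [show x + t1 • u - t1 • u = x by abel] at hs3
      rcases Finset.mem_insert.mp hβ with rfl | hβs
      · exact huq huf
      · exact hxn β hβs hxf
    have hfin : {t : ℝ | ∃ β ∈ insert i s, x + t • u ∈ q β}.Finite := by
      have hset : {t : ℝ | ∃ β ∈ insert i s, x + t • u ∈ q β}
          = ⋃ β ∈ (insert i s : Finset (V n)), {t : ℝ | x + t • u ∈ q β} := by
        ext t
        simp
      rw [hset]
      exact Set.Finite.biUnion (insert i s).finite_toSet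
        (fun β hβ => Set.Subsingleton.finite (hbad β hβ))
    obtain ⟨t, ht⟩ := hfin.exists_notMem
    refine ⟨x + t • u, Submodule.add_mem _ hxp (Submodule.smul_mem _ _ hup), ?_⟩
    intro β hβ hmem
    exact ht ⟨β, hβ, hmem⟩


/-- Every nontrivial product of reflections of `Φ` moves some root of `Φ`:
    there is a root in `Mov(w)`. -/
theorem root_in_mov {Φ : Set (V n)} (hΦ : IsCrystalRootSystem Φ) {w : V n ≃ₗ[ℝ] V n}
    (hw : Word Φ w) (hne : w ≠ 1) : ∃ α ∈ Φ, α ∈ movSet w := by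
  by_contra hcon
  push_neg at hcon
  have hortho := ortho_of_word hw
  have hmovFix : movSet w = (fixS w)ᗮ := mov_eq_fix_orthogonal hortho
  have hproper : ∀ β ∈ hΦ.finite.toFinset, ¬ fixS w ≤ (Submodule.span ℝ {β})ᗮ := by
    intro β hβf hle
    have hβΦ : β ∈ Φ := hΦ.finite.mem_toFinset.mp hβf
    apply hcon β hβΦ
    rw [hmovFix, Submodule.mem_orthogonal]
    intro u hu
    have h2 := hle hu
    rw [Submodule.mem_orthogonal] at h2
    have hβu := h2 β (Submodule.mem_span_singleton_self β)
    rw [real_inner_comm]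
    exact hβu
  obtain ⟨x, hxF, hxn⟩ := avoid (fixS w) hΦ.finite.toFinset
    (fun β => (Submodule.span ℝ {β})ᗮ) hproper
  have hx : ∀ β ∈ Φ, ⟪β, x⟫ ≠ 0 := by
    intro β hβ h0
    apply hxn β (hΦ.finite.mem_toFinset.mpr hβ)
    rw [Submodule.mem_orthogonal]
    intro z hz
    obtain ⟨c, rfl⟩ := Submodule.mem_span_singleton.mp hz
    rw [real_inner_smul_left, h0, mul_zero]
  exact hne (stab_eq_one hΦ hx hw (mem_fixS_iff.mp hxF))

/-- Carter: every product of reflections of `Φ` is a product of `dim Mov(w)`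
    reflections of `Φ`. -/
theorem carter {Φ : Set (V n)} (hΦ : IsCrystalRootSystem Φ) :
    ∀ d (w : V n ≃ₗ[ℝ] V n), Module.finrank ℝ (movSet w) = d → Word Φ w →
    ∃ l : List (V n ≃ₗ[ℝ] V n), (∀ g ∈ l, IsRefl Φ g) ∧ l.prod = w ∧ l.length = d := by
  intro d
  induction d using Nat.strong_induction_on with
  | _ d ih =>
  intro w hd hw
  by_cases h1 : w = 1
  · subst h1
    have hbot : movSet (1 : V n ≃ₗ[ℝ] V n) = ⊥ := movSet_eq_bot_iff.mpr rfl
    rw [hbot, finrank_bot] at hd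
    exact ⟨[], by simp, rfl, by simp [← hd]⟩
  · obtain ⟨α, hαΦ, hαmov⟩ := root_in_mov hΦ hw h1
    have hα0 : α ≠ 0 := hΦ.ne_zero α hαΦ
    set w' := rf α * w with hw'
    have hword' : Word Φ w' := word_mul (word_rf hαΦ) hw
    have hlt : fixS w < fixS w' := fix_lt_of_mov (ortho_of_word hw) hα0 hαmov
    have hmovlt : Module.finrank ℝ (movSet w') < Module.finrank ℝ (movSet w) := by
      have e1 := finrank_mov_add_fix w
      have e2 := finrank_mov_add_fix w'
      have e3 := Submodule.finrank_lt_finrank_of_lt hlt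
      omega
    have hrec : w = rf α * w' := by rw [hw', ← mul_assoc, rf_mul_self, one_mul]
    have hub : Module.finrank ℝ (movSet w) ≤ Module.finrank ℝ (movSet w') + 1 := by
      have hle : movSet w ≤ Submodule.span ℝ {α} ⊔ movSet w' := by
        nth_rewrite 1 [hrec]
        exact (mov_mul_le _ _).trans (sup_le_sup (mov_rf_le α) le_rfl)
      have e1 : Module.finrank ℝ (movSet w)
          ≤ Module.finrank ℝ (Submodule.span ℝ {α} ⊔ movSet w' : Submodule ℝ (V n)) :=
        Submodule.finrank_mono hle
      have e2 := Submodule.finrank_sup_add_finrank_inf_eq (Submodule.span ℝ {α}) (movSet w')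
      have e3 : Module.finrank ℝ (Submodule.span ℝ ({α} : Set (V n))) = 1 :=
        finrank_span_singleton hα0
      omega
    obtain ⟨l', hl', hprod', hlen'⟩ :=
      ih (Module.finrank ℝ (movSet w')) (hd ▸ hmovlt) w' rfl hword'
    refine ⟨rf α :: l', ?_, ?_, ?_⟩
    · rintro x hx
      rcases List.mem_cons.mp hx with h | h
      · exact h ▸ ⟨α, hαΦ, isReflAlong_rf α⟩
      · exact hl' x h
    · rw [List.prod_cons, hprod', ← hrec]
    · simp only [List.length_cons, hlen']
      omega

end Carter


/-- If `w ∈ W` has reflection length `k` and `w = s_{β₁}⋯s_{β_k}` is a minimal-length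
product of reflections, then the move-set `Mov(w) = Im(w − Id)` has `ℝ`-basis the coroots
`{β₁^∨, …, β_k^∨}`; in particular `dim_ℝ Mov(w) = ℓ_R(w)`. -/
theorem movSet_basis_of_minimal_reflection_factorization {n k : ℕ} (Φ : Set (V n))
    (hΦ : IsCrystalRootSystem Φ) (β : Fin k → V n) (hβ : ∀ i, β i ∈ Φ)
    (g : Fin k → (V n ≃ₗ[ℝ] V n)) (hg : ∀ i, IsReflAlong (β i) (g i))
    (w : V n ≃ₗ[ℝ] V n) (hw : w = (List.ofFn g).prod)
    (hmin : reflLen Φ w = k) :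
    (∃ b : Module.Basis (Fin k) ℝ (movSet w), ∀ i, (b i : V n) = coroot (β i)) ∧
      Module.finrank ℝ (movSet w) = reflLen Φ w := by
  classical
  have hmemofn : ∀ h ∈ List.ofFn g, ∃ i, g i = h := fun h hh => List.mem_ofFn.mp hh
  have hword : Carter.Word Φ w := ⟨List.ofFn g, fun h hh => by
    obtain ⟨i, hi⟩ := hmemofn h hh
    exact ⟨β i, hβ i, hi ▸ hg i⟩, hw.symm⟩
  set d := Module.finrank ℝ (movSet w) with hd
  have hmovle : movSet w ≤ Submodule.span ℝ (Set.range β) := by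
    rw [hw]
    exact Carter.mov_word_le _ (fun h hh => by
      obtain ⟨i, hi⟩ := hmemofn h hh
      exact ⟨β i, Set.mem_range_self i, hi ▸ hg i⟩)
  have hspanle : Module.finrank ℝ (Submodule.span ℝ (Set.range β)) ≤ k := by
    have := finrank_range_le_card (R := ℝ) β
    rw [Set.finrank] at this
    simpa using this
  have hdk : d ≤ k := (Submodule.finrank_mono hmovle).trans hspanle
  have hkd : k ≤ d := by
    obtain ⟨l, hl, hlprod, hllen⟩ := Carter.carter hΦ d w rfl hword
    rw [← hmin]
    exact Nat.sInf_le ⟨l, hllen, hl, hlprod⟩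
  have hdk' : d = k := le_antisymm hdk hkd
  have hspan : movSet w = Submodule.span ℝ (Set.range β) :=
    Submodule.eq_of_le_of_finrank_le hmovle (by rw [← hd, hdk']; exact hspanle)
  have hip : ∀ i, ⟪β i, β i⟫ ≠ 0 := fun i h => hΦ.ne_zero _ (hβ i) (inner_self_eq_zero.mp h)
  have hcor : Submodule.span ℝ (Set.range fun i => coroot (β i))
      = Submodule.span ℝ (Set.range β) := by
    apply le_antisymm
    · rw [Submodule.span_le]
      rintro _ ⟨i, rfl⟩
      exact Submodule.smul_mem _ _ (Submodule.subset_span (Set.mem_range_self i))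
    · rw [Submodule.span_le]
      rintro _ ⟨i, rfl⟩
      have hre : β i = (⟪β i, β i⟫ / 2) • coroot (β i) := by
        rw [coroot, smul_smul]
        have hs : ⟪β i, β i⟫ / 2 * (2 / ⟪β i, β i⟫) = 1 := by
          have h2 := hip i
          set s := ⟪β i, β i⟫ with hsdef
          field_simp
        rw [hs, one_smul]
      rw [hre]
      exact Submodule.smul_mem _ _ (Submodule.subset_span (Set.mem_range_self i))
  have hcormov : Submodule.span ℝ (Set.range fun i => coroot (β i)) = movSet w :=
    hcor.trans hspan.symm
  have hmem : ∀ i, coroot (β i) ∈ movSet w := fun i =>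
    hcormov ▸ Submodule.subset_span (Set.mem_range_self i)
  let b : Fin k → movSet w := fun i => ⟨coroot (β i), hmem i⟩
  have hbspan : ⊤ ≤ Submodule.span ℝ (Set.range b) := by
    have hinj : Function.Injective (movSet w).subtype := Submodule.injective_subtype _
    have hmap : Submodule.map (movSet w).subtype (Submodule.span ℝ (Set.range b))
        = Submodule.map (movSet w).subtype ⊤ := by
      rw [Submodule.map_span, Submodule.map_top, Submodule.range_subtype,
        ← Set.range_comp]
      exact hcormov
    exact (Submodule.map_injective_of_injective hinj hmap).ge
  have hcard : Fintype.card (Fin k) = Module.finrank ℝ (movSet w) := by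
    rw [Fintype.card_fin, ← hd, hdk']
  let B := basisOfTopLeSpanOfCardEqFinrank b hbspan hcard
  refine ⟨⟨B, fun i => ?_⟩, by rw [hmin]; exact hdk'⟩
  have hco := congrFun (coe_basisOfTopLeSpanOfCardEqFinrank b hbspan hcard) i
  show ((B i : movSet w) : V n) = coroot (β i)
  rw [hco]
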